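/- The rank of the n × n matrix I_n − Y*Y (where Y* denotes the conjugate transpose of Y) is at most μ_1 + ⋯ + μ_r. Consequently, if d := n − (μ_1 + ⋯ + μ_r) ≥ 1, then the kernel of I_n − Y*Y has dimension at least d; in particular Y has the singular value 1 with multiplicity at least d. -/

import Mathlib

open Matrix

/-- The upper-left `p × q` corner truncation of an `m × m` matrix. -/
def cornerTrunc {m p q : ℕ} (hp : p ≤ m) (hq : q ≤ m)
    (U : Matrix (Fin m) (Fin m) ℂ) : Matrix (Fin p) (Fin q) ℂ :=
  Matrix.of fun a b => U (Fin.castLE hp a) (Fin.castLE hq b)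

/-- The product `T_r ⋯ T_1` (indexed so that `T j` in Lean is `T_{j+1}`). -/
noncomputable def truncProd (n : ℕ) (ν : ℕ → ℕ)
    (T : (j : ℕ) → Matrix (Fin (n + ν (j + 1))) (Fin (n + ν j)) ℂ) :
    (r : ℕ) → Matrix (Fin (n + ν r)) (Fin (n + ν 0)) ℂ
  | 0 => 1
  | r + 1 => T r * truncProd n ν T r

lemma matrank_add_le {p q : ℕ} (A B : Matrix (Fin p) (Fin q) ℂ) :
    (A + B).rank ≤ A.rank + B.rank := by
  have h : LinearMap.range (A + B).mulVecLin ≤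
      LinearMap.range A.mulVecLin ⊔ LinearMap.range B.mulVecLin := by
    rw [Matrix.mulVecLin_add]
    rintro x ⟨v, rfl⟩
    exact Submodule.add_mem_sup ⟨v, rfl⟩ ⟨v, rfl⟩
  calc (A + B).rank
      ≤ Module.finrank ℂ ↥(LinearMap.range A.mulVecLin ⊔ LinearMap.range B.mulVecLin) :=
        Submodule.finrank_mono h
    _ ≤ A.rank + B.rank := Submodule.finrank_add_le_finrank_add_finrank _ _

/-- `I - TᴴT` for a corner `T` of a unitary matrix is `BᴴB` for the complementary
bottom-left block `B`, hence has rank at most the number of rows of `B`. -/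
lemma corner_rank_le {p q s : ℕ} (hq : q ≤ p + s) (U : Matrix (Fin (p + s)) (Fin (p + s)) ℂ)
    (hU : Uᴴ * U = 1) :
    ((1 : Matrix (Fin q) (Fin q) ℂ) -
      (cornerTrunc (Nat.le_add_right p s) hq U)ᴴ * cornerTrunc (Nat.le_add_right p s) hq U).rank
      ≤ s := by
  set T := cornerTrunc (Nat.le_add_right p s) hq U
  set B : Matrix (Fin s) (Fin q) ℂ :=
    Matrix.of fun a b => U (Fin.natAdd p a) (Fin.castLE hq b) with hB
  have key : (1 : Matrix (Fin q) (Fin q) ℂ) - Tᴴ * T = Bᴴ * B := by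
    ext b b'
    have hUe := congrArg (fun M => M (Fin.castLE hq b) (Fin.castLE hq b')) hU
    have hcast : (Fin.castLE hq b = Fin.castLE hq b') ↔ (b = b') :=
      (Fin.castLE_injective hq).eq_iff
    simp only [Matrix.sub_apply, Matrix.mul_apply, Matrix.conjTranspose_apply,
      Matrix.one_apply, hcast] at hUe ⊢
    rw [Fin.sum_univ_add (f := fun a : Fin (p + s) =>
      star (U a (Fin.castLE hq b)) * U a (Fin.castLE hq b'))] at hUe
    have hT : ∀ a : Fin p, T a b = U (Fin.castAdd s a) (Fin.castLE hq b) := fun a => rfl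
    have hT' : ∀ a : Fin p, T a b' = U (Fin.castAdd s a) (Fin.castLE hq b') := fun a => rfl
    have hBv : ∀ a : Fin s, B a b = U (Fin.natAdd p a) (Fin.castLE hq b) := fun a => rfl
    have hBv' : ∀ a : Fin s, B a b' = U (Fin.natAdd p a) (Fin.castLE hq b') := fun a => rfl
    simp only [hT, hT', hBv, hBv']
    linear_combination -hUe
  calc (1 - Tᴴ * T).rank = (Bᴴ * B).rank := by rw [key]
    _ ≤ B.rank := Matrix.rank_mul_le_right _ _
    _ ≤ Fintype.card (Fin s) := Matrix.rank_le_card_height _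
    _ = s := Fintype.card_fin s

theorem stmt15
    (n r : ℕ) (hn : 1 ≤ n) (hr : 1 ≤ r)
    (ν μ : ℕ → ℕ) (hν0 : ν 0 = 0)
    (hμ : ∀ j, 1 ≤ j → j ≤ r → 1 ≤ μ j)
    (hm : ∀ j, j < r → n + ν j ≤ n + ν (j + 1) + μ (j + 1))
    (U : (j : ℕ) →
      Matrix (Fin (n + ν (j + 1) + μ (j + 1))) (Fin (n + ν (j + 1) + μ (j + 1))) ℂ)
    (hU : ∀ j < r, (U j)ᴴ * U j = 1)
    (T : (j : ℕ) → Matrix (Fin (n + ν (j + 1))) (Fin (n + ν j)) ℂ)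
    (hT : ∀ (j : ℕ) (hj : j < r),
      T j = cornerTrunc (Nat.le_add_right _ _) (hm j hj) (U j)) :
    (1 - (truncProd n ν T r)ᴴ * truncProd n ν T r).rank ≤
      ∑ j ∈ Finset.range r, μ (j + 1) ∧
    (1 ≤ n - ∑ j ∈ Finset.range r, μ (j + 1) →
      n - ∑ j ∈ Finset.range r, μ (j + 1) ≤
        Module.finrank ℂ (LinearMap.ker
          (Matrix.mulVecLin (1 - (truncProd n ν T r)ᴴ * truncProd n ν T r)))) := by
  have key : ∀ k, k ≤ r → (1 - (truncProd n ν T k)ᴴ * truncProd n ν T k).rank ≤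
      ∑ j ∈ Finset.range k, μ (j + 1) := by
    intro k
    induction k with
    | zero => intro _; simp [truncProd, Matrix.rank_zero]
    | succ k ih =>
      intro hk
      have hkr : k < r := hk
      have hsplit : (1 : Matrix (Fin (n + ν 0)) (Fin (n + ν 0)) ℂ) -
          (truncProd n ν T (k+1))ᴴ * truncProd n ν T (k+1) =
          (1 - (truncProd n ν T k)ᴴ * truncProd n ν T k) +
            (truncProd n ν T k)ᴴ * ((1 - (T k)ᴴ * T k) * truncProd n ν T k) := by
        simp only [truncProd, Matrix.conjTranspose_mul, Matrix.sub_mul, Matrix.mul_sub,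
          Matrix.one_mul, Matrix.mul_one, Matrix.mul_assoc]
        abel
      rw [hsplit]
      have h1 : ((truncProd n ν T k)ᴴ *
          ((1 - (T k)ᴴ * T k) * truncProd n ν T k)).rank ≤ μ (k + 1) := by
        refine le_trans (Matrix.rank_mul_le_right _ _)
          (le_trans (Matrix.rank_mul_le_left _ _) ?_)
        rw [hT k hkr]
        exact corner_rank_le (hm k hkr) (U k) (hU k hkr)
      calc _ ≤ _ + _ := matrank_add_le _ _
        _ ≤ ∑ j ∈ Finset.range k, μ (j + 1) + μ (k + 1) :=
            add_le_add (ih (le_of_lt hkr)) h1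
        _ = ∑ j ∈ Finset.range (k + 1), μ (j + 1) := (Finset.sum_range_succ _ _).symm
  refine ⟨key r le_rfl, fun _ => ?_⟩
  have h2 := LinearMap.finrank_range_add_finrank_ker
      (Matrix.mulVecLin (1 - (truncProd n ν T r)ᴴ * truncProd n ν T r))
  rw [Module.finrank_fin_fun] at h2
  have h3 : (1 - (truncProd n ν T r)ᴴ * truncProd n ν T r).rank =
      Module.finrank ℂ (LinearMap.range
        (Matrix.mulVecLin (1 - (truncProd n ν T r)ᴴ * truncProd n ν T r))) := rfl
  have h4 := key r le_rfl
  omega
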